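/- Let Q ⊆ ℝ^d be a nonempty convex set, let N be a norm on ℝ^d, and let N* denote its dual norm, N*(z) = sup{⟨z, x⟩ : N(x) ≤ 1}. Let σ > 0 and let f : Q → ℝ be (1/σ)-strongly convex with respect to N, meaning: for all x, y ∈ Q and every g ∈ ℝ^d satisfying f(z) ≥ f(x) + ⟨g, z − x⟩ for all z ∈ Q, one has f(y) − f(x) − ⟨g, y − x⟩ ≥ (1/(2σ))·N(y − x)². Let z₁, z₂ ∈ ℝ^d and suppose y₁ ∈ Q maximizes y ↦ ⟨z₁, y⟩ − f(y) over Q and y₂ ∈ Q maximizes y ↦ ⟨z₂, y⟩ − f(y) over Q. Then N(y₁ − y₂) ≤ σ·N*(z₁ − z₂), and moreover the Fenchel conjugate f*(z) = sup_{y ∈ Q}(⟨z, y⟩ − f(y)) satisfies f*(z₂) − f*(z₁) − ⟨y₁, z₂ − z₁⟩ ≤ (σ/2)·N*(z₂ − z₁)². -/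

import Mathlib

open Finset

/-- The standard inner product on `ℝ^d`. -/
noncomputable def dotp {d : ℕ} (x y : Fin d → ℝ) : ℝ := ∑ i, x i * y i

/-- The dual norm `N*(z) = sup {⟨z,x⟩ : N(x) ≤ 1}`. -/
noncomputable def dualNorm {d : ℕ} (N : (Fin d → ℝ) → ℝ) (z : Fin d → ℝ) : ℝ :=
  sSup ((fun x => dotp z x) '' {x | N x ≤ 1})

lemma dotp_comm {d : ℕ} (x y : Fin d → ℝ) : dotp x y = dotp y x := by
  simp [dotp, mul_comm]

lemma dotp_sub_right {d : ℕ} (z x y : Fin d → ℝ) :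
    dotp z (x - y) = dotp z x - dotp z y := by
  simp [dotp, mul_sub, Finset.sum_sub_distrib]

lemma dotp_sub_left {d : ℕ} (z w x : Fin d → ℝ) :
    dotp (z - w) x = dotp z x - dotp w x := by
  simp [dotp, sub_mul, Finset.sum_sub_distrib]

lemma dotp_smul_right {d : ℕ} (z : Fin d → ℝ) (a : ℝ) (x : Fin d → ℝ) :
    dotp z (a • x) = a * dotp z x := by
  simp only [dotp, Finset.mul_sum]
  exact Finset.sum_congr rfl fun i _ => by simp [Pi.smul_apply]; ring

lemma dotp_zero_right {d : ℕ} (z : Fin d → ℝ) : dotp z 0 = 0 := by simp [dotp]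

lemma dotp_le_abs_sum {d : ℕ} (z x : Fin d → ℝ) :
    dotp z x ≤ (∑ i, |z i|) * ‖x‖ := by
  calc dotp z x ≤ ∑ i, |z i * x i| := Finset.sum_le_sum fun i _ => le_abs_self _
    _ = ∑ i, |z i| * |x i| := by simp [abs_mul]
    _ ≤ ∑ i, |z i| * ‖x‖ := by
        refine Finset.sum_le_sum fun i _ => ?_
        exact mul_le_mul_of_nonneg_left (by simpa using norm_le_pi_norm x i) (abs_nonneg _)
    _ = (∑ i, |z i|) * ‖x‖ := by rw [Finset.sum_mul]

theorem norm_lower_bound (d : ℕ) (N : (Fin d → ℝ) → ℝ)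
    (hN0 : ∀ x, N x = 0 ↔ x = 0)
    (hNsmul : ∀ (a : ℝ) (x : Fin d → ℝ), N (a • x) = |a| * N x)
    (hNtri : ∀ x y, N (x + y) ≤ N x + N y) :
    ∃ c > 0, ∀ x, c * ‖x‖ ≤ N x := by
  have N0 : N 0 = 0 := (hN0 0).mpr rfl
  have Nneg : ∀ x, 0 ≤ N x := by
    intro x
    have h := hNtri x ((-1 : ℝ) • x)
    rw [hNsmul] at h
    simp at h
    nlinarith [h]
  set C : ℝ := ∑ i, N (Pi.single i 1) with hC
  have hCnn : 0 ≤ C := Finset.sum_nonneg fun i _ => Nneg _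
  have hupper : ∀ x, N x ≤ C * ‖x‖ := by
    intro x
    have hx : x = ∑ i, (x i) • (Pi.single i (1:ℝ) : Fin d → ℝ) := by
      funext j
      simp [Finset.sum_apply, Pi.single_apply, mul_comm]
    have htri : N (∑ i, (x i) • (Pi.single i (1:ℝ) : Fin d → ℝ)) ≤
        ∑ i, N ((x i) • (Pi.single i (1:ℝ) : Fin d → ℝ)) := by
      classical
      refine Finset.le_sum_of_subadditive N ?_ ?_ _ _
      · exact N0.le
      · exact hNtri
    calc N x = N (∑ i, (x i) • (Pi.single i (1:ℝ) : Fin d → ℝ)) := by rw [← hx]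
      _ ≤ ∑ i, N ((x i) • (Pi.single i (1:ℝ) : Fin d → ℝ)) := htri
      _ = ∑ i, |x i| * N (Pi.single i 1) := by simp [hNsmul]
      _ ≤ ∑ i, ‖x‖ * N (Pi.single i 1) := by
          refine Finset.sum_le_sum fun i _ => ?_
          exact mul_le_mul_of_nonneg_right (by simpa using norm_le_pi_norm x i) (Nneg _)
      _ = C * ‖x‖ := by rw [← Finset.mul_sum, hC]; ring
  have habs : ∀ x y, |N x - N y| ≤ N (x - y) := by
    intro x y
    rw [abs_sub_le_iff]
    constructor
    · have := hNtri (x - y) y; simpa using this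
    · have := hNtri (y - x) x
      have h2 : N (y - x) = N (x - y) := by
        have := hNsmul (-1) (x - y); simp at this; simpa [neg_sub] using this
      simp [h2] at this
      linarith
  have Ncont : Continuous N := by
    refine (LipschitzWith.of_dist_le_mul (K := C.toNNReal) ?_).continuous
    intro x y
    rw [Real.dist_eq, dist_eq_norm]
    calc |N x - N y| ≤ N (x - y) := habs x y
      _ ≤ C * ‖x - y‖ := hupper _
      _ ≤ C.toNNReal * ‖x - y‖ := by
          gcongr
          exact Real.le_coe_toNNReal C
  by_cases hd : ∀ x : Fin d → ℝ, x = 0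
  · refine ⟨1, one_pos, fun x => ?_⟩
    rw [hd x]; simp [N0]
  · push_neg at hd
    obtain ⟨x₀, hx₀⟩ := hd
    have hsne : (Metric.sphere (0 : Fin d → ℝ) 1).Nonempty := by
      refine ⟨‖x₀‖⁻¹ • x₀, ?_⟩
      rw [mem_sphere_zero_iff_norm, norm_smul, norm_inv, norm_norm]
      exact inv_mul_cancel₀ (ne_of_gt (norm_pos_iff.mpr hx₀))
    obtain ⟨xm, hxm, hmin⟩ :=
      (isCompact_sphere (0 : Fin d → ℝ) 1).exists_isMinOn hsne Ncont.continuousOn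
    have hxmnorm : ‖xm‖ = 1 := mem_sphere_zero_iff_norm.mp hxm
    have hxmne : xm ≠ 0 := by intro h; rw [h] at hxmnorm; simp at hxmnorm
    have hc : 0 < N xm := by
      rcases lt_or_eq_of_le (Nneg xm) with h | h
      · exact h
      · exact absurd ((hN0 xm).mp h.symm) hxmne
    refine ⟨N xm, hc, fun x => ?_⟩
    by_cases hx : x = 0
    · simp [hx, N0]
    · have hxn : (0:ℝ) < ‖x‖ := norm_pos_iff.mpr hx
      have hu : ‖x‖⁻¹ • x ∈ Metric.sphere (0 : Fin d → ℝ) 1 := by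
        rw [mem_sphere_zero_iff_norm, norm_smul, norm_inv, norm_norm]
        exact inv_mul_cancel₀ (ne_of_gt hxn)
      have h2 : N xm ≤ N (‖x‖⁻¹ • x) := hmin hu
      rw [hNsmul, abs_inv, abs_norm] at h2
      calc N xm * ‖x‖ ≤ (‖x‖⁻¹ * N x) * ‖x‖ := by nlinarith [h2]
        _ = N x := by field_simp

theorem dualNorm_bdd (d : ℕ) (N : (Fin d → ℝ) → ℝ)
    (hN0 : ∀ x, N x = 0 ↔ x = 0)
    (hNsmul : ∀ (a : ℝ) (x : Fin d → ℝ), N (a • x) = |a| * N x)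
    (hNtri : ∀ x y, N (x + y) ≤ N x + N y) (z : Fin d → ℝ) :
    BddAbove ((fun x => dotp z x) '' {x | N x ≤ 1}) := by
  obtain ⟨c, hc, hlow⟩ := norm_lower_bound d N hN0 hNsmul hNtri
  refine ⟨(∑ i, |z i|) * (1 / c), ?_⟩
  rintro _ ⟨x, hx, rfl⟩
  have hxb : ‖x‖ ≤ 1 / c := by
    have := hlow x
    have hNx : N x ≤ 1 := hx
    rw [le_div_iff₀ hc]
    nlinarith
  calc dotp z x ≤ (∑ i, |z i|) * ‖x‖ := dotp_le_abs_sum z x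
    _ ≤ (∑ i, |z i|) * (1 / c) :=
        mul_le_mul_of_nonneg_left hxb (Finset.sum_nonneg fun i _ => abs_nonneg _)

theorem dotp_le_dualNorm_mul (d : ℕ) (N : (Fin d → ℝ) → ℝ)
    (hN0 : ∀ x, N x = 0 ↔ x = 0)
    (hNsmul : ∀ (a : ℝ) (x : Fin d → ℝ), N (a • x) = |a| * N x)
    (hNtri : ∀ x y, N (x + y) ≤ N x + N y) (z x : Fin d → ℝ) :
    dotp z x ≤ dualNorm N z * N x := by
  have N0 : N 0 = 0 := (hN0 0).mpr rfl
  have Nneg : ∀ y, 0 ≤ N y := by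
    intro y
    have h := hNtri y ((-1 : ℝ) • y)
    rw [hNsmul] at h
    simp at h
    nlinarith [h]
  have hbdd := dualNorm_bdd d N hN0 hNsmul hNtri z
  by_cases hx : N x = 0
  · have : x = 0 := (hN0 x).mp hx
    simp [this, dotp_zero_right, N0]
  · have ht : 0 < N x := lt_of_le_of_ne (Nneg x) (Ne.symm hx)
    have hu : N ((N x)⁻¹ • x) ≤ 1 := by
      rw [hNsmul, abs_inv, abs_of_pos ht, inv_mul_cancel₀ (ne_of_gt ht)]
    have hmem : dotp z ((N x)⁻¹ • x) ∈ (fun x => dotp z x) '' {x | N x ≤ 1} :=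
      ⟨_, hu, rfl⟩
    have hle : dotp z ((N x)⁻¹ • x) ≤ dualNorm N z := le_csSup hbdd hmem
    rw [dotp_smul_right] at hle
    calc dotp z x = (N x) * ((N x)⁻¹ * dotp z x) := by field_simp
      _ ≤ (N x) * dualNorm N z := mul_le_mul_of_nonneg_left hle (le_of_lt ht)
      _ = dualNorm N z * N x := mul_comm _ _

theorem dualNorm_nonneg (d : ℕ) (N : (Fin d → ℝ) → ℝ)
    (hN0 : ∀ x, N x = 0 ↔ x = 0)
    (hNsmul : ∀ (a : ℝ) (x : Fin d → ℝ), N (a • x) = |a| * N x)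
    (hNtri : ∀ x y, N (x + y) ≤ N x + N y) (z : Fin d → ℝ) :
    0 ≤ dualNorm N z := by
  have N0 : N 0 = 0 := (hN0 0).mpr rfl
  have hbdd := dualNorm_bdd d N hN0 hNsmul hNtri z
  have hmem : (0:ℝ) ∈ (fun x => dotp z x) '' {x | N x ≤ 1} :=
    ⟨0, by simp [N0], dotp_zero_right z⟩
  exact le_csSup hbdd hmem

/-- **Strong convexity implies dual smoothness** (Theorem 2.1 of the paper): if
`f : Q → ℝ` is `(1/σ)`-strongly convex with respect to a norm `N`, and `y₁, y₂`
maximize `⟨z₁,·⟩ - f` and `⟨z₂,·⟩ - f` over `Q` respectively, then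
`N(y₁-y₂) ≤ σ·N*(z₁-z₂)` and the Fenchel conjugate `f*` is `σ`-smooth with respect
to the dual norm `N*`. -/
theorem strong_convexity_implies_dual_smoothness
    (d : ℕ) (Q : Set (Fin d → ℝ)) (hQne : Q.Nonempty) (hQconv : Convex ℝ Q)
    (N : (Fin d → ℝ) → ℝ)
    (hN0 : ∀ x, N x = 0 ↔ x = 0)
    (hNsmul : ∀ (a : ℝ) (x : Fin d → ℝ), N (a • x) = |a| * N x)
    (hNtri : ∀ x y, N (x + y) ≤ N x + N y)
    (σ : ℝ) (hσ : 0 < σ)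
    (f : (Fin d → ℝ) → ℝ)
    (hstrong : ∀ x ∈ Q, ∀ y ∈ Q, ∀ g : Fin d → ℝ,
      (∀ z ∈ Q, f x + dotp g (z - x) ≤ f z) →
      (1 / (2 * σ)) * N (y - x) ^ 2 ≤ f y - f x - dotp g (y - x))
    (z₁ z₂ y₁ y₂ : Fin d → ℝ)
    (hy₁ : y₁ ∈ Q) (hy₁max : ∀ y ∈ Q, dotp z₁ y - f y ≤ dotp z₁ y₁ - f y₁)
    (hy₂ : y₂ ∈ Q) (hy₂max : ∀ y ∈ Q, dotp z₂ y - f y ≤ dotp z₂ y₂ - f y₂) :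
    N (y₁ - y₂) ≤ σ * dualNorm N (z₁ - z₂) ∧
    sSup ((fun y => dotp z₂ y - f y) '' Q) - sSup ((fun y => dotp z₁ y - f y) '' Q) -
        dotp y₁ (z₂ - z₁) ≤
      (σ / 2) * dualNorm N (z₂ - z₁) ^ 2 := by
  have N0 : N 0 = 0 := (hN0 0).mpr rfl
  have Nneg : ∀ y, 0 ≤ N y := by
    intro y
    have h := hNtri y ((-1 : ℝ) • y)
    rw [hNsmul] at h
    simp [N0] at h
    linarith
  have Nsym : ∀ x y : Fin d → ℝ, N (x - y) = N (y - x) := by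
    intro x y
    have := hNsmul (-1) (x - y)
    simp at this
    simpa [neg_sub] using this.symm
  -- subgradient properties
  have h1 : ∀ z ∈ Q, f y₁ + dotp z₁ (z - y₁) ≤ f z := by
    intro z hz
    have := hy₁max z hz
    rw [dotp_sub_right]
    linarith
  have h2 : ∀ z ∈ Q, f y₂ + dotp z₂ (z - y₂) ≤ f z := by
    intro z hz
    have := hy₂max z hz
    rw [dotp_sub_right]
    linarith
  have hs1 := hstrong y₁ hy₁ y₂ hy₂ z₁ h1
  have hs2 := hstrong y₂ hy₂ y₁ hy₁ z₂ h2
  -- combined inequality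
  have hsum : (1 / σ) * N (y₁ - y₂) ^ 2 ≤ dotp (z₁ - z₂) (y₁ - y₂) := by
    have e1 : dotp z₁ (y₂ - y₁) = -(dotp z₁ (y₁ - y₂)) := by
      rw [dotp_sub_right, dotp_sub_right]; ring
    have e2 : dotp (z₁ - z₂) (y₁ - y₂) = dotp z₁ (y₁ - y₂) - dotp z₂ (y₁ - y₂) := by
      rw [dotp_sub_left]
    rw [Nsym y₂ y₁] at hs1
    rw [e2]
    rw [e1] at hs1
    have h2σ : (0:ℝ) < 2 * σ := by linarith
    have := add_le_add hs1 hs2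
    have hh : (1 / (2 * σ)) * N (y₁ - y₂) ^ 2 + (1 / (2 * σ)) * N (y₁ - y₂) ^ 2
        = (1 / σ) * N (y₁ - y₂) ^ 2 := by
      field_simp; ring
    linarith [this]
  have hkey := dotp_le_dualNorm_mul d N hN0 hNsmul hNtri (z₁ - z₂) (y₁ - y₂)
  have hDnn := dualNorm_nonneg d N hN0 hNsmul hNtri (z₁ - z₂)
  constructor
  · -- first part
    set t := N (y₁ - y₂) with ht
    set D := dualNorm N (z₁ - z₂) with hD
    have htnn : 0 ≤ t := Nneg _
    rcases eq_or_lt_of_le htnn with h | h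
    · rw [← h]; positivity
    · have hsum' : t ^ 2 ≤ σ * (D * t) := by
        have hmul := mul_le_mul_of_nonneg_left (le_trans hsum hkey) (le_of_lt hσ)
        calc t ^ 2 = σ * ((1 / σ) * t ^ 2) := by field_simp
          _ ≤ σ * (D * t) := hmul
      have htt : t * t ≤ (σ * D) * t := by nlinarith [hsum']
      exact le_of_mul_le_mul_right htt h
  · -- second part
    have hsup1 : sSup ((fun y => dotp z₁ y - f y) '' Q) = dotp z₁ y₁ - f y₁ := by
      refine IsGreatest.csSup_eq ⟨⟨y₁, hy₁, rfl⟩, ?_⟩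
      rintro _ ⟨y, hy, rfl⟩
      exact hy₁max y hy
    have hsup2 : sSup ((fun y => dotp z₂ y - f y) '' Q) = dotp z₂ y₂ - f y₂ := by
      refine IsGreatest.csSup_eq ⟨⟨y₂, hy₂, rfl⟩, ?_⟩
      rintro _ ⟨y, hy, rfl⟩
      exact hy₂max y hy
    rw [hsup1, hsup2]
    have hdy : dotp y₁ (z₂ - z₁) = dotp z₂ y₁ - dotp z₁ y₁ := by
      rw [dotp_comm, dotp_sub_left]
    have hkey2 := dotp_le_dualNorm_mul d N hN0 hNsmul hNtri (z₂ - z₁) (y₂ - y₁)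
    have hDnn2 := dualNorm_nonneg d N hN0 hNsmul hNtri (z₂ - z₁)
    -- from hs1 : (1/(2σ)) N(y₂-y₁)² ≤ f y₂ - f y₁ - dotp z₁ (y₂ - y₁)
    have e3 : dotp (z₂ - z₁) (y₂ - y₁) = dotp z₂ (y₂ - y₁) - dotp z₁ (y₂ - y₁) := by
      rw [dotp_sub_left]
    have e4 : dotp z₂ (y₂ - y₁) = dotp z₂ y₂ - dotp z₂ y₁ := dotp_sub_right _ _ _
    set t := N (y₂ - y₁) with ht
    set D := dualNorm N (z₂ - z₁) with hD
    have htnn : 0 ≤ t := Nneg _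
    have h2σ : (0:ℝ) < 2 * σ := by linarith
    have hb : dotp z₂ y₂ - f y₂ - (dotp z₁ y₁ - f y₁) - dotp y₁ (z₂ - z₁)
        ≤ D * t - (1 / (2 * σ)) * t ^ 2 := by
      rw [hdy]
      have := hkey2
      rw [e3, e4] at this
      nlinarith [hs1]
    have hfinal : D * t - (1 / (2 * σ)) * t ^ 2 ≤ (σ / 2) * D ^ 2 := by
      have e : D * t - (1 / (2 * σ)) * t ^ 2 = ((2 * σ) * (D * t) - t ^ 2) / (2 * σ) := by
        field_simp
      have e2 : (σ / 2) * D ^ 2 = (σ ^ 2 * D ^ 2) / (2 * σ) := by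
        field_simp
      rw [e, e2]
      have hnum : (2 * σ) * (D * t) - t ^ 2 ≤ σ ^ 2 * D ^ 2 := by
        nlinarith [sq_nonneg (σ * D - t)]
      exact (div_le_div_iff_of_pos_right h2σ).mpr hnum
    linarith
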